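/- Define the IsoScore of a nonnegative vector v ∈ ℝⁿ with ‖v‖ = √n by ι(v) := ((n − δ(v)²(n − √n))² − n) / (n(n − 1)) where δ(v) = ‖v − 𝟏‖/√(2(n − √n)). Then ι(v) ∈ [0, 1]. -/

import Mathlib

open Real Finset

theorem isoScore_mem_Icc (n : ℕ) (hn : 2 ≤ n) (v : Fin n → ℝ)
    (hv : ∀ i, 0 ≤ v i) (hnorm : ∑ i, (v i) ^ 2 = n) :
    (((n : ℝ) - (Real.sqrt (∑ i, (v i - 1) ^ 2) /
        Real.sqrt (2 * (n - Real.sqrt n))) ^ 2 * ((n : ℝ) - Real.sqrt n)) ^ 2 - n) /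
      ((n : ℝ) * ((n : ℝ) - 1)) ∈ Set.Icc (0 : ℝ) 1 := by
  have hn1 : (1 : ℝ) < (n : ℝ) := by exact_mod_cast hn.trans_lt' one_lt_two
  have hnpos : (0 : ℝ) < n := by linarith
  have hsn : Real.sqrt n < n := (Real.sqrt_lt' hnpos).mpr (by nlinarith)
  have hD : (0 : ℝ) < 2 * ((n : ℝ) - Real.sqrt n) := by linarith
  set S := ∑ i, v i with hS
  have hA : ∑ i, (v i - 1) ^ 2 = 2 * (n : ℝ) - 2 * S := by
    have h1 : ∀ i ∈ Finset.univ, (v i - 1) ^ 2 = (v i) ^ 2 - 2 * v i + 1 := by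
      intro i _; ring
    rw [Finset.sum_congr rfl h1]
    simp [Finset.sum_add_distrib, Finset.sum_sub_distrib, ← Finset.mul_sum, hnorm, hS]
    ring
  have hApos : (0 : ℝ) ≤ ∑ i, (v i - 1) ^ 2 := by positivity
  have hsq : (Real.sqrt (∑ i, (v i - 1) ^ 2) / Real.sqrt (2 * (n - Real.sqrt n))) ^ 2
      = (2 * (n : ℝ) - 2 * S) / (2 * ((n : ℝ) - Real.sqrt n)) := by
    rw [div_pow, Real.sq_sqrt hApos, Real.sq_sqrt hD.le, hA]
  have hkey : (n : ℝ) - (Real.sqrt (∑ i, (v i - 1) ^ 2) /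
      Real.sqrt (2 * (n - Real.sqrt n))) ^ 2 * ((n : ℝ) - Real.sqrt n) = S := by
    rw [hsq]
    field_simp [(sub_pos.mpr hsn).ne']
    ring
  rw [hkey]
  have hSn : (n : ℝ) ≤ S ^ 2 := by
    rw [← hnorm]
    exact Finset.sum_sq_le_sq_sum_of_nonneg (fun i _ => hv i)
  have hSn2 : S ^ 2 ≤ (n : ℝ) ^ 2 := by
    have := sq_sum_le_card_mul_sum_sq (s := Finset.univ) (f := v)
    simp [hnorm] at this
    calc S ^ 2 ≤ (n : ℝ) * (n : ℝ) := this
    _ = (n : ℝ) ^ 2 := by ring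
  constructor
  · apply div_nonneg (by linarith) (by nlinarith)
  · rw [div_le_one (by nlinarith)]
    nlinarith
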